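/- Let α > 1, b > 0 and C > 0 be reals with C ≤ x* where x* = (b/(α−1))^(1/α). Let x₁, …, x_{m*} be positive reals with x_i ≤ C for all i and total load L = x₁ + ⋯ + x_{m*}, and let m̄ be an integer with 1 ≤ m̄ ≤ m* and L ≤ m̄·C. Then Σ_{i=1}^{m*} (x_i^α + b) ≥ m̄·b + m̄·(L/m̄)^α. (When x* ≥ C, the power of any capacity-feasible assignment is lower bounded by the power of the assignment that evenly distributes the total load among m̄ machines, where m̄ is the minimum number of machines needed, i.e., the optimal bin-packing solution.) -/

import Mathlib

open Real Set

private lemma stmt8_aux (α b L : ℝ) (hα : 1 < α) (hb : 0 < b) (hL : 0 ≤ L)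
    {s t : ℝ} (hs : 0 < s) (hst : s ≤ t)
    (hkey : (α - 1) * L ^ α ≤ b * s ^ α) :
    b * s + L ^ α * s ^ (1 - α) ≤ b * t + L ^ α * t ^ (1 - α) := by
  set f : ℝ → ℝ := fun m => b * m + L ^ α * m ^ (1 - α) with hf
  have hder : ∀ m : ℝ, m ≠ 0 →
      HasDerivAt f (b + L ^ α * ((1 - α) * m ^ (1 - α - 1))) m := by
    intro m hm
    have h1 : HasDerivAt (fun m : ℝ => b * m) (b * 1) m := (hasDerivAt_id m).const_mul b
    have h2 := (Real.hasDerivAt_rpow_const (p := 1 - α) (Or.inl hm)).const_mul (L ^ α)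
    have h3 := h1.add h2
    rw [mul_one] at h3
    exact h3
  have hmono : MonotoneOn f (Icc s t) := by
    apply monotoneOn_of_deriv_nonneg (convex_Icc s t)
    · intro m hm
      exact (hder m (lt_of_lt_of_le hs hm.1).ne').continuousAt.continuousWithinAt
    · rw [interior_Icc]
      intro m hm
      exact (hder m (lt_of_lt_of_le hs hm.1.le).ne').differentiableAt.differentiableWithinAt
    · rw [interior_Icc]
      intro m hm
      have hm0 : 0 < m := lt_of_lt_of_le hs hm.1.le
      rw [(hder m hm0.ne').deriv]
      have hsm : s ^ α ≤ m ^ α := Real.rpow_le_rpow hs.le hm.1.le (by linarith)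
      have hmα : 0 < m ^ α := Real.rpow_pos_of_pos hm0 α
      have h3 : (α - 1) * L ^ α ≤ b * m ^ α := hkey.trans (by nlinarith)
      have h4 : m ^ (1 - α - 1) = (m ^ α)⁻¹ := by
        rw [show (1 - α - 1 : ℝ) = -α by ring, Real.rpow_neg hm0.le]
      rw [h4]
      rw [← sub_nonneg] at *
      have : 0 ≤ (b * m ^ α - (α - 1) * L ^ α) * (m ^ α)⁻¹ := by positivity
      have hme : (m ^ α) * (m ^ α)⁻¹ = 1 := mul_inv_cancel₀ hmα.ne'
      nlinarith
  exact hmono ⟨le_refl s, hst⟩ ⟨hst, le_refl t⟩ hst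

/-- Let α > 1, b > 0, C > 0 with C ≤ x* = (b/(α−1))^(1/α).
Let x₁, …, x_{m*} be positive loads each at most C with total load L, and let
m̄ be an integer with 1 ≤ m̄ ≤ m* and L ≤ m̄·C. Then
Σ (x_i^α + b) ≥ m̄·b + m̄·(L/m̄)^α. -/
theorem stmt8 (α b C : ℝ) (hα : 1 < α) (hb : 0 < b) (hC : 0 < C)
    (hCx : C ≤ (b / (α - 1)) ^ (1 / α))
    (mstar : ℕ) (x : Fin mstar → ℝ) (hx : ∀ i, 0 < x i) (hxC : ∀ i, x i ≤ C)
    (L : ℝ) (hL : L = ∑ i, x i)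
    (mbar : ℕ) (hm1 : 1 ≤ mbar) (hm2 : mbar ≤ mstar) (hLm : L ≤ mbar * C) :
    ∑ i, (x i ^ α + b) ≥ mbar * b + mbar * (L / mbar) ^ α := by
  have hα1 : (0:ℝ) < α - 1 := sub_pos.mpr hα
  have hms : 1 ≤ mstar := hm1.trans hm2
  have hmb : (0:ℝ) < (mbar:ℝ) := by exact_mod_cast hm1
  have hmsR : (0:ℝ) < (mstar:ℝ) := by exact_mod_cast hms
  have hmbs : (mbar:ℝ) ≤ (mstar:ℝ) := by exact_mod_cast hm2
  have hne : Nonempty (Fin mstar) := Fin.pos_iff_nonempty.mp (by omega)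
  have hL0 : 0 < L := by
    rw [hL]; exact Finset.sum_pos (fun i _ => hx i) Finset.univ_nonempty
  -- Jensen: mstar * (L / mstar) ^ α ≤ ∑ x_i ^ α
  have jensen : (mstar:ℝ) * (L / mstar) ^ α ≤ ∑ i, x i ^ α := by
    have := Real.rpow_arith_mean_le_arith_mean_rpow (Finset.univ : Finset (Fin mstar))
      (fun _ => 1 / (mstar:ℝ)) x (fun i _ => by positivity)
      (by simp [Finset.card_univ]; field_simp) (fun i _ => (hx i).le) hα.le
    have h1 : ∑ i, (1 / (mstar:ℝ)) * x i = L / mstar := by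
      rw [hL, ← Finset.mul_sum]; ring
    rw [h1, ← Finset.mul_sum] at this
    calc (mstar:ℝ) * (L / mstar) ^ α ≤ (mstar:ℝ) * ((1 / mstar) * ∑ i, x i ^ α) :=
          by apply mul_le_mul_of_nonneg_left this hmsR.le
      _ = ∑ i, x i ^ α := by field_simp
  -- key capacity bound : (α-1) * L^α ≤ b * mbar^α
  have hkey : (α - 1) * L ^ α ≤ b * (mbar:ℝ) ^ α := by
    have hxs : (0:ℝ) ≤ b / (α - 1) := by positivity
    have hLx : L ≤ (mbar:ℝ) * (b / (α - 1)) ^ (1 / α) :=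
      hLm.trans (mul_le_mul_of_nonneg_left hCx hmb.le)
    have h1 : L ^ α ≤ ((mbar:ℝ) * (b / (α - 1)) ^ (1 / α)) ^ α :=
      Real.rpow_le_rpow hL0.le hLx (by linarith)
    have h2 : ((mbar:ℝ) * (b / (α - 1)) ^ (1 / α)) ^ α
        = (mbar:ℝ) ^ α * (b / (α - 1)) := by
      rw [Real.mul_rpow hmb.le (Real.rpow_nonneg hxs _), ← Real.rpow_mul hxs, one_div,
        inv_mul_cancel₀ (by positivity : α ≠ 0), Real.rpow_one]
    rw [h2] at h1
    have hmα : (0:ℝ) < (mbar:ℝ) ^ α := Real.rpow_pos_of_pos hmb α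
    calc (α - 1) * L ^ α ≤ (α - 1) * ((mbar:ℝ) ^ α * (b / (α - 1))) :=
          mul_le_mul_of_nonneg_left h1 hα1.le
      _ = b * (mbar:ℝ) ^ α := by field_simp
  -- form conversion : m * (L/m)^α = L^α * m^(1-α) for m > 0
  have hform : ∀ m : ℝ, 0 < m → m * (L / m) ^ α = L ^ α * m ^ (1 - α) := by
    intro m hm
    rw [Real.div_rpow hL0.le hm.le, Real.rpow_sub hm, Real.rpow_one]
    field_simp
  have hmono := stmt8_aux α b L hα hb hL0.le hmb hmbs hkey
  have hsum : ∑ i, (x i ^ α + b) = (∑ i, x i ^ α) + mstar * b := by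
    rw [Finset.sum_add_distrib, Finset.sum_const, Finset.card_univ, Fintype.card_fin,
      nsmul_eq_mul]
  rw [ge_iff_le, hsum]
  have := hform (mbar:ℝ) hmb
  have := hform (mstar:ℝ) hmsR
  nlinarith [jensen, hmono]
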